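/- Let a(x) = a_0(x^Δ) and b(x) = b_0(x^Δ) in F_q[x]/(x^ℓ - 1) where ℓ = ℓ_0·Δ. Then F_q[x]/(x^ℓ-1) decomposes the GB code GB(a,b) as a direct sum: the coordinates split into Δ residue classes mod Δ, and on each class the check equations are exactly those of GB(a_0, b_0) with circulant size ℓ_0. Consequently, the code dimension satisfies k = Δ·k_0 and the minimum distance satisfies d = d_0, where [[2ℓ_0, k_0, d_0]] are the parameters of GB(a_0, b_0). -/

import Mathlib

open Polynomial Matrix

/-- The `ℓ × ℓ` cyclic permutation matrix `P` with `P eᵢ = e_{i+1 mod ℓ}`. -/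
def cyclicP (F : Type*) [Semiring F] (n : ℕ) [NeZero n] : Matrix (Fin n) (Fin n) F :=
  Matrix.of fun i j => if i = j + 1 then 1 else 0

/-- Hamming weight of a vector. -/
noncomputable def hWt {n F : Type*} [Zero F] (c : n → F) : ℕ := Set.ncard {i | c i ≠ 0}

/-- The X-check matrix `H_X = (a(P) | b(P))` of the GB code `GB(a,b)`. -/
noncomputable def GBHX (F : Type*) [Field F] (ℓ : ℕ) [NeZero ℓ] (a b : Polynomial F) :
    Matrix (Fin ℓ) (Fin ℓ ⊕ Fin ℓ) F :=
  Matrix.fromCols (Polynomial.aeval (cyclicP F ℓ) a) (Polynomial.aeval (cyclicP F ℓ) b)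

/-- The Z-check matrix `H_Z = (b(P)ᵀ | -a(P)ᵀ)` of the GB code `GB(a,b)`. -/
noncomputable def GBHZ (F : Type*) [Field F] (ℓ : ℕ) [NeZero ℓ] (a b : Polynomial F) :
    Matrix (Fin ℓ) (Fin ℓ ⊕ Fin ℓ) F :=
  Matrix.fromCols ((Polynomial.aeval (cyclicP F ℓ) b)ᵀ) (-(Polynomial.aeval (cyclicP F ℓ) a)ᵀ)

/-- Minimum distance of the CSS code with check matrices `H_X`, `H_Z`: the least Hamming
weight of a vector that satisfies all checks of one type but is not a linear combination
of the rows of the corresponding check matrix. -/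
noncomputable def distCSS {F : Type*} [Field F] {q m1 m2 : Type*} [Fintype q]
    (HX : Matrix m1 q F) (HZ : Matrix m2 q F) : ℕ :=
  sInf ({w | ∃ c : q → F, HX.mulVec c = 0 ∧
          c ∉ Submodule.span F (Set.range fun i => HZ i) ∧ w = hWt c} ∪
        {w | ∃ c : q → F, HZ.mulVec c = 0 ∧
          c ∉ Submodule.span F (Set.range fun i => HX i) ∧ w = hWt c})

/-- Number of logical qudits of the GB code `GB(a,b)`. -/
noncomputable def gbDim (F : Type*) [Field F] (ℓ : ℕ) [NeZero ℓ] (a b : Polynomial F) : ℕ :=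
  2 * ℓ - (GBHX F ℓ a b).rank - (GBHZ F ℓ a b).rank

/-- Minimum distance of the GB code `GB(a,b)`. -/
noncomputable def gbDist (F : Type*) [Field F] (ℓ : ℕ) [NeZero ℓ] (a b : Polynomial F) : ℕ :=
  distCSS (GBHX F ℓ a b) (GBHZ F ℓ a b)

set_option linter.unusedSectionVars false
set_option linter.unusedVariables false

open Fin.NatCast in
lemma cyclicP_pow (F : Type*) [Semiring F] (n : ℕ) [NeZero n] (d : ℕ) :
    (cyclicP F n) ^ d = Matrix.of fun i j => if i = j + (d : Fin n) then 1 else 0 := by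
  induction d with
  | zero => ext i j; simp [Matrix.one_apply, eq_comm]
  | succ d ih =>
    ext i j
    rw [pow_succ, ih]
    simp only [Matrix.mul_apply, cyclicP, Matrix.of_apply, ite_mul, one_mul, zero_mul,
      mul_ite, mul_one, mul_zero]
    rw [Finset.sum_ite_eq' Finset.univ (j + 1)]
    simp [add_assoc, add_comm (1 : Fin n)]

open Fin.NatCast in
lemma finProd_add_delta (ℓ0 Δ : ℕ) [NeZero ℓ0] [NeZero Δ] [NeZero (ℓ0 * Δ)]
    (q : Fin ℓ0) (r : Fin Δ) :
    finProdFinEquiv (q, r) + (Δ : Fin (ℓ0 * Δ)) = finProdFinEquiv (q + 1, r) := by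
  have hΔ : 0 < Δ := Nat.pos_of_ne_zero (NeZero.ne Δ)
  have hℓ0 : 0 < ℓ0 := Nat.pos_of_ne_zero (NeZero.ne ℓ0)
  have hq : q.val < ℓ0 := q.isLt
  have hr : r.val < Δ := r.isLt
  apply Fin.ext
  rw [Fin.add_def]
  simp only [finProdFinEquiv_apply_val, Fin.val_natCast]
  have hq1 : ((q + 1 : Fin ℓ0) : ℕ) = (q.val + 1) % ℓ0 := by
    rw [Fin.add_def]; simp [Fin.val_one']
  rw [hq1, Nat.add_mod_mod]
  rcases Nat.lt_or_ge (q.val + 1) ℓ0 with h | h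
  · rw [Nat.mod_eq_of_lt h]
    have hlt : r.val + Δ * q.val + Δ < ℓ0 * Δ := by
      have : r.val + Δ * q.val + Δ < Δ * (q.val + 2) := by
        have := Nat.mul_le_mul_left Δ (Nat.le_refl (q.val + 1)); nlinarith
      calc r.val + Δ * q.val + Δ < Δ * (q.val + 2) := this
        _ ≤ Δ * ℓ0 := Nat.mul_le_mul_left Δ (by omega)
        _ = ℓ0 * Δ := Nat.mul_comm _ _
    rw [Nat.mod_eq_of_lt hlt, Nat.mul_add, Nat.mul_one, Nat.add_assoc]
  · have heq : q.val + 1 = ℓ0 := by omega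
    rw [heq, Nat.mod_self, Nat.mul_zero, Nat.add_zero]
    have : r.val + Δ * q.val + Δ = r.val + ℓ0 * Δ := by
      have : Δ * q.val + Δ = ℓ0 * Δ := by
        rw [← Nat.mul_succ, Nat.succ_eq_add_one, heq, Nat.mul_comm]
      omega
    rw [this, Nat.add_mod_right, Nat.mod_eq_of_lt]
    calc r.val < Δ := hr
      _ = 1 * Δ := (Nat.one_mul Δ).symm
      _ ≤ ℓ0 * Δ := Nat.mul_le_mul_right Δ hℓ0

lemma cyclicP_pow_submatrix (F : Type*) [Semiring F] (ℓ0 Δ : ℕ) [NeZero ℓ0] [NeZero Δ]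
    [NeZero (ℓ0 * Δ)] :
    ((cyclicP F (ℓ0 * Δ)) ^ Δ).submatrix finProdFinEquiv finProdFinEquiv =
      blockDiagonal (fun _ : Fin Δ => cyclicP F ℓ0) := by
  ext ⟨q, r⟩ ⟨q', r'⟩
  rw [cyclicP_pow]
  simp only [Matrix.submatrix_apply, Matrix.of_apply, Matrix.blockDiagonal_apply]
  rw [finProd_add_delta]
  simp only [EmbeddingLike.apply_eq_iff_eq, Prod.mk.injEq]
  by_cases h1 : r = r' <;> by_cases h2 : q = q' + 1 <;> simp [h1, h2, cyclicP]

/-- `A ↦ blockDiagonal (fun _ => A)` as an `F`-algebra hom. -/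
noncomputable def bdConstAlgHom (F : Type*) [CommSemiring F] (m α : Type*) [DecidableEq m]
    [DecidableEq α] [Fintype m] [Fintype α] :
    Matrix m m F →ₐ[F] Matrix (m × α) (m × α) F :=
  { toRingHom := (Matrix.blockDiagonalRingHom m α F).comp (Pi.constRingHom α (Matrix m m F))
    commutes' := fun c => by
      simp only [RingHom.coe_comp, Function.comp_apply, Pi.constRingHom]
      show Matrix.blockDiagonal (fun _ : α => algebraMap F (Matrix m m F) c) = _
      rw [Algebra.algebraMap_eq_smul_one]
      calc Matrix.blockDiagonal (fun _ : α => (c • 1 : Matrix m m F))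
          = Matrix.blockDiagonal (c • fun _ : α => (1 : Matrix m m F)) := rfl
        _ = c • Matrix.blockDiagonal (fun _ : α => (1 : Matrix m m F)) :=
            Matrix.blockDiagonal_smul c _
        _ = c • Matrix.blockDiagonal (1 : α → Matrix m m F) := rfl
        _ = c • (1 : Matrix (m × α) (m × α) F) := by rw [Matrix.blockDiagonal_one]
        _ = algebraMap F _ c := (Algebra.algebraMap_eq_smul_one c).symm }

lemma bdConstAlgHom_apply (F : Type*) [CommSemiring F] (m α : Type*) [DecidableEq m]
    [DecidableEq α] [Fintype m] [Fintype α] (A : Matrix m m F) :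
    bdConstAlgHom F m α A = Matrix.blockDiagonal (fun _ : α => A) := rfl

/-- Key decomposition: evaluating `p ∘ X^Δ` on the big cyclic matrix and regrouping
coordinates gives a block diagonal of `p` evaluated on the small cyclic matrix. -/
lemma aeval_comp_submatrix (F : Type*) [CommRing F] (ℓ0 Δ : ℕ) [NeZero ℓ0] [NeZero Δ]
    [NeZero (ℓ0 * Δ)] (p : F[X]) :
    (Polynomial.aeval (cyclicP F (ℓ0 * Δ)) (p.comp (X ^ Δ))).submatrix
        finProdFinEquiv finProdFinEquiv =
      blockDiagonal (fun _ : Fin Δ => Polynomial.aeval (cyclicP F ℓ0) p) := by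
  have h1 : Polynomial.aeval (cyclicP F (ℓ0 * Δ)) (p.comp (X ^ Δ)) =
      Polynomial.aeval ((cyclicP F (ℓ0 * Δ)) ^ Δ) p := by
    rw [Polynomial.aeval_comp, map_pow, Polynomial.aeval_X]
  rw [h1]
  have h2 : ∀ M : Matrix (Fin (ℓ0 * Δ)) (Fin (ℓ0 * Δ)) F,
      M.submatrix finProdFinEquiv finProdFinEquiv =
        (Matrix.reindexAlgEquiv F F (finProdFinEquiv (m := ℓ0) (n := Δ)).symm) M := by
    intro M; simp [Matrix.reindexAlgEquiv, Matrix.reindex]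
  rw [h2, ← Polynomial.aeval_algHom_apply, ← h2, cyclicP_pow_submatrix, ← bdConstAlgHom_apply,
    Polynomial.aeval_algHom_apply, bdConstAlgHom_apply]

/-- The column regrouping equivalence. -/
def colEquiv (ℓ0 Δ : ℕ) : (Fin ℓ0 ⊕ Fin ℓ0) × Fin Δ ≃ Fin (ℓ0 * Δ) ⊕ Fin (ℓ0 * Δ) :=
  (Equiv.sumProdDistrib (Fin ℓ0) (Fin ℓ0) (Fin Δ)).trans
    (Equiv.sumCongr finProdFinEquiv finProdFinEquiv)

section decomp
variable (F : Type*) [Field F] (ℓ0 Δ : ℕ) [NeZero ℓ0] [NeZero Δ] [NeZero (ℓ0 * Δ)]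
  (a0 b0 : Polynomial F)

lemma fromColumns_submatrix (A B : Matrix (Fin (ℓ0 * Δ)) (Fin (ℓ0 * Δ)) F)
    (A0 B0 : Matrix (Fin ℓ0) (Fin ℓ0) F)
    (hA : A.submatrix finProdFinEquiv finProdFinEquiv = blockDiagonal (fun _ : Fin Δ => A0))
    (hB : B.submatrix finProdFinEquiv finProdFinEquiv = blockDiagonal (fun _ : Fin Δ => B0)) :
    (Matrix.fromCols A B).submatrix finProdFinEquiv (colEquiv ℓ0 Δ) =
      blockDiagonal (fun _ : Fin Δ => Matrix.fromCols A0 B0) := by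
  ext ⟨i, k⟩ ⟨c, k'⟩
  have hA' := congrFun (congrFun hA (i, k))
  have hB' := congrFun (congrFun hB (i, k))
  rcases c with j | j
  · have := hA' (j, k')
    simpa [colEquiv, Matrix.fromCols, Matrix.blockDiagonal_apply] using this
  · have := hB' (j, k')
    simpa [colEquiv, Matrix.fromCols, Matrix.blockDiagonal_apply] using this

lemma GBHX_submatrix :
    (GBHX F (ℓ0 * Δ) (a0.comp (X ^ Δ)) (b0.comp (X ^ Δ))).submatrix
        finProdFinEquiv (colEquiv ℓ0 Δ) =
      blockDiagonal (fun _ : Fin Δ => GBHX F ℓ0 a0 b0) := by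
  exact fromColumns_submatrix F ℓ0 Δ _ _ _ _
    (aeval_comp_submatrix F ℓ0 Δ a0) (aeval_comp_submatrix F ℓ0 Δ b0)

lemma GBHZ_submatrix :
    (GBHZ F (ℓ0 * Δ) (a0.comp (X ^ Δ)) (b0.comp (X ^ Δ))).submatrix
        finProdFinEquiv (colEquiv ℓ0 Δ) =
      blockDiagonal (fun _ : Fin Δ => GBHZ F ℓ0 a0 b0) := by
  apply fromColumns_submatrix
  · rw [← Matrix.transpose_submatrix, aeval_comp_submatrix, Matrix.blockDiagonal_transpose]
  · have : (-(Polynomial.aeval (cyclicP F (ℓ0 * Δ)) (a0.comp (X ^ Δ)))ᵀ).submatrix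
        finProdFinEquiv finProdFinEquiv =
        -(((Polynomial.aeval (cyclicP F (ℓ0 * Δ)) (a0.comp (X ^ Δ)))ᵀ).submatrix
          finProdFinEquiv finProdFinEquiv) := rfl
    rw [this, ← Matrix.transpose_submatrix, aeval_comp_submatrix,
      Matrix.blockDiagonal_transpose]
    ext ⟨i, k⟩ ⟨j, k'⟩
    simp only [Matrix.neg_apply, Matrix.blockDiagonal_apply]
    split <;> simp

end decomp

section blockdiag
variable {F : Type*} [Field F] {m n α : Type*} [Fintype m] [Fintype n] [Fintype α]
  [DecidableEq α]

/-- Restriction of a vector to the `k`-th block of coordinates. -/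
noncomputable def sliceMap (F : Type*) [Field F] {n α : Type*} (k : α) :
    ((n × α) → F) →ₗ[F] (n → F) :=
  LinearMap.funLeft F F (fun j => (j, k))

@[simp] lemma sliceMap_apply (k : α) (c : (n × α) → F) (j : n) :
    sliceMap F k c j = c (j, k) := rfl

/-- Extension of a vector by zero into the `k`-th block of coordinates. -/
noncomputable def embMap (F : Type*) [Field F] {n α : Type*} [DecidableEq α] (k : α) :
    (n → F) →ₗ[F] ((n × α) → F) where
  toFun v := fun p => if p.2 = k then v p.1 else 0
  map_add' v w := by funext p; by_cases h : p.2 = k <;> simp [h]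
  map_smul' t v := by funext p; by_cases h : p.2 = k <;> simp [h]

@[simp] lemma embMap_apply (k : α) (v : n → F) (p : n × α) :
    embMap F k v p = if p.2 = k then v p.1 else 0 := rfl

lemma embMap_row (M : α → Matrix m n F) (k : α) (i : m) :
    embMap F k (M k i) = blockDiagonal M (i, k) := by
  funext ⟨j, k'⟩
  by_cases h : k' = k
  · subst h; simp [Matrix.blockDiagonal_apply]
  · simp [h, Matrix.blockDiagonal_apply, Ne.symm h]

lemma sum_embMap_sliceMap (c : (n × α) → F) :
    ∑ k : α, embMap F k (sliceMap F k c) = c := by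
  funext ⟨j, k'⟩
  rw [Finset.sum_apply]
  simp only [embMap_apply, sliceMap_apply]
  rw [Finset.sum_ite_eq Finset.univ k' (fun k => c (j, k))]
  simp

lemma mem_span_blockDiagonal (M : α → Matrix m n F) (c : (n × α) → F) :
    c ∈ Submodule.span F (Set.range (blockDiagonal M)) ↔
      ∀ k, sliceMap F k c ∈ Submodule.span F (Set.range (M k)) := by
  constructor
  · intro hc k
    have hle : Submodule.span F (Set.range (blockDiagonal M)) ≤
        Submodule.comap (sliceMap F k) (Submodule.span F (Set.range (M k))) := by
      rw [Submodule.span_le]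
      rintro _ ⟨⟨i, k'⟩, rfl⟩
      simp only [SetLike.mem_coe, Submodule.mem_comap]
      by_cases h : k' = k
      · subst h
        have : sliceMap F k' (blockDiagonal M (i, k')) = M k' i := by
          funext j; simp [Matrix.blockDiagonal_apply]
        rw [this]
        exact Submodule.subset_span ⟨i, rfl⟩
      · have : sliceMap F k (blockDiagonal M (i, k')) = 0 := by
          funext j; simp [Matrix.blockDiagonal_apply, h]
        rw [this]; exact Submodule.zero_mem _
    exact hle hc
  · intro h
    rw [← sum_embMap_sliceMap c]
    apply Submodule.sum_mem
    intro k _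
    have hle : Submodule.span F (Set.range (M k)) ≤
        Submodule.comap (embMap F k) (Submodule.span F (Set.range (blockDiagonal M))) := by
      rw [Submodule.span_le]
      rintro _ ⟨i, rfl⟩
      simp only [SetLike.mem_coe, Submodule.mem_comap, embMap_row]
      exact Submodule.subset_span ⟨(i, k), rfl⟩
    exact hle (h k)

lemma blockDiagonal_mulVec_apply (M : α → Matrix m n F) (v : (n × α) → F) (i : m) (k : α) :
    (blockDiagonal M).mulVec v (i, k) = (M k).mulVec (sliceMap F k v) i := by
  simp only [Matrix.mulVec, dotProduct]
  rw [Fintype.sum_prod_type]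
  rw [Finset.sum_comm]
  simp only [Matrix.blockDiagonal_apply, ite_mul, zero_mul]
  have : ∀ x : α, ∑ j : n, (if k = x then M k i j * v (j, x) else 0) =
      if k = x then ∑ j : n, M k i j * v (j, x) else 0 := by
    intro x; split <;> simp
  rw [Finset.sum_congr rfl (fun x _ => this x)]
  rw [Finset.sum_ite_eq Finset.univ k (fun x => ∑ j : n, M k i j * v (j, x))]
  simp

/-- Currying linear equivalence. -/
noncomputable def curryLEquiv (F : Type*) [Field F] (n α : Type*) :
    ((n × α) → F) ≃ₗ[F] (α → (n → F)) where
  toFun c := fun k j => c (j, k)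
  invFun v := fun p => v p.2 p.1
  map_add' _ _ := rfl
  map_smul' _ _ := rfl
  left_inv c := rfl
  right_inv v := rfl

/-- A pi-submodule is equivalent to the pi of submodules. -/
noncomputable def piSubmoduleEquiv {V : α → Type*} [∀ k, AddCommGroup (V k)]
    [∀ k, Module F (V k)] (p : ∀ k, Submodule F (V k)) :
    (Submodule.pi Set.univ p) ≃ₗ[F] (∀ k, p k) where
  toFun x k := ⟨x.1 k, x.2 k (Set.mem_univ k)⟩
  invFun v := ⟨fun k => v k, fun k _ => (v k).2⟩
  map_add' _ _ := rfl
  map_smul' _ _ := rfl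
  left_inv x := rfl
  right_inv v := rfl

lemma rank_blockDiagonal (M : α → Matrix m n F) :
    (blockDiagonal M).rank = ∑ k : α, (M k).rank := by
  classical
  rw [Matrix.rank_eq_finrank_span_row]
  have hspan : Submodule.span F (Set.range (blockDiagonal M)) =
      Submodule.comap (curryLEquiv F n α : ((n × α) → F) →ₗ[F] (α → (n → F)))
        (Submodule.pi Set.univ (fun k => Submodule.span F (Set.range (M k)))) := by
    ext c
    rw [Submodule.mem_comap, Submodule.mem_pi, mem_span_blockDiagonal]
    constructor
    · intro h k _; exact h k
    · intro h k; exact h k (Set.mem_univ k)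
  rw [show (blockDiagonal M).row = blockDiagonal M from rfl, hspan]
  rw [Submodule.comap_equiv_eq_map_symm]
  rw [LinearEquiv.finrank_map_eq]
  rw [LinearEquiv.finrank_eq (piSubmoduleEquiv _)]
  rw [Module.finrank_pi_fintype]
  congr 1
  funext k
  rw [Matrix.rank_eq_finrank_span_row]
  rfl

end blockdiag

section hwt
variable {F : Type*} [Field F] {n α β : Type*}

lemma hWt_comp_equiv (e : β ≃ n) (c : n → F) : hWt (fun i => c (e i)) = hWt c := by
  unfold hWt
  have : {i : n | c i ≠ 0} = e '' {i : β | c (e i) ≠ 0} := by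
    ext x
    simp only [Set.mem_image, Set.mem_setOf_eq]
    constructor
    · intro hx; exact ⟨e.symm x, by simpa using hx, e.apply_symm_apply x⟩
    · rintro ⟨y, hy, rfl⟩; exact hy
  rw [this, Set.ncard_image_of_injective _ e.injective]

lemma hWt_embMap [Fintype n] [Fintype α] [DecidableEq α] (k : α) (v : n → F) :
    hWt (embMap F k v) = hWt v := by
  unfold hWt
  have : {p : n × α | embMap F k v p ≠ 0} = (fun j => (j, k)) '' {j : n | v j ≠ 0} := by
    ext ⟨j, k'⟩
    simp only [Set.mem_image, Set.mem_setOf_eq, embMap_apply]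
    constructor
    · intro hp
      by_cases h : k' = k
      · subst h; exact ⟨j, by simpa using hp, rfl⟩
      · simp [h] at hp
    · rintro ⟨j', hj', h⟩
      obtain ⟨h1, h2⟩ := Prod.mk.injEq .. ▸ (h : (j', k) = (j, k'))
      subst h1; subst h2
      simpa using hj'
  rw [this, Set.ncard_image_of_injective]
  intro x y hxy; exact congrArg Prod.fst hxy

lemma hWt_sliceMap_le [Fintype n] [Fintype α] (k : α) (c : (n × α) → F) :
    hWt (sliceMap F k c) ≤ hWt c := by
  unfold hWt
  have himg : (fun j => (j, k)) '' {j : n | c (j, k) ≠ 0} ⊆ {p : n × α | c p ≠ 0} := by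
    rintro _ ⟨j, hj, rfl⟩; exact hj
  have : {j : n | sliceMap F k c j ≠ 0} = {j : n | c (j, k) ≠ 0} := rfl
  rw [this, ← Set.ncard_image_of_injective {j : n | c (j, k) ≠ 0}
    (fun x y hxy => congrArg Prod.fst hxy : Function.Injective (fun j : n => (j, k)))]
  exact Set.ncard_le_ncard himg (Set.toFinite _)

end hwt

section dist
variable {F : Type*} [Field F]

/-- One branch of the `distCSS` set. -/
def distSet {q m1 m2 : Type*} [Fintype q] (A : Matrix m1 q F) (B : Matrix m2 q F) : Set ℕ :=
  {w | ∃ c : q → F, A.mulVec c = 0 ∧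
    c ∉ Submodule.span F (Set.range fun i => B i) ∧ w = hWt c}

lemma distCSS_eq {q m1 m2 : Type*} [Fintype q] (HX : Matrix m1 q F) (HZ : Matrix m2 q F) :
    distCSS HX HZ = sInf (distSet HX HZ ∪ distSet HZ HX) := rfl

lemma mulVec_submatrix_eq_zero_iff {q q' m1 m1' : Type*} [Fintype q] [Fintype q']
    (A : Matrix m1 q F) (eX : m1' ≃ m1) (e : q' ≃ q) (c : q' → F) :
    (A.submatrix eX e).mulVec c = 0 ↔ A.mulVec (c ∘ e.symm) = 0 := by
  rw [Matrix.submatrix_mulVec_equiv]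
  constructor
  · intro h
    funext x
    have := congrFun h (eX.symm x)
    simpa using this
  · intro h
    rw [h]
    funext x; rfl

lemma mem_span_submatrix_iff {q q' m2 m2' : Type*} [Fintype q] [Fintype q']
    (B : Matrix m2 q F) (eZ : m2' ≃ m2) (e : q' ≃ q) (c : q' → F) :
    c ∈ Submodule.span F (Set.range fun i => (B.submatrix eZ e) i) ↔
      (c ∘ e.symm) ∈ Submodule.span F (Set.range fun i => B i) := by
  set T : (q → F) ≃ₗ[F] (q' → F) := LinearEquiv.funCongrLeft F F e with hT
  have hrange : (Set.range fun i => (B.submatrix eZ e) i) = T '' (Set.range fun i => B i) := by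
    ext v
    constructor
    · rintro ⟨i, rfl⟩
      exact ⟨B (eZ i), ⟨eZ i, rfl⟩, rfl⟩
    · rintro ⟨_, ⟨i, rfl⟩, rfl⟩
      refine ⟨eZ.symm i, ?_⟩
      funext j
      simp [T, Matrix.submatrix_apply, LinearEquiv.funCongrLeft]
  have hcoe : (⇑T : (q → F) → (q' → F)) = ⇑(T : (q → F) →ₗ[F] (q' → F)) := rfl
  rw [hcoe] at hrange
  rw [hrange, ← Submodule.map_span (T : (q → F) →ₗ[F] (q' → F))]
  rw [Submodule.mem_map_equiv]
  have hsymm : T.symm c = c ∘ ⇑e.symm := by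
    funext j
    simp [T, LinearEquiv.funCongrLeft]
  rw [hsymm]

lemma distSet_submatrix {q q' m1 m2 m1' m2' : Type*} [Fintype q] [Fintype q']
    (A : Matrix m1 q F) (B : Matrix m2 q F) (eX : m1' ≃ m1) (eZ : m2' ≃ m2) (e : q' ≃ q) :
    distSet (A.submatrix eX e) (B.submatrix eZ e) = distSet A B := by
  ext w
  constructor
  · rintro ⟨c', h1, h2, rfl⟩
    refine ⟨c' ∘ e.symm, (mulVec_submatrix_eq_zero_iff A eX e c').1 h1,
      fun hmem => h2 ((mem_span_submatrix_iff B eZ e c').2 hmem), ?_⟩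
    have h3 : (fun i => (c' ∘ e.symm) (e i)) = c' := by funext i; simp
    conv_lhs => rw [← h3]
    exact hWt_comp_equiv e _
  · rintro ⟨c, h1, h2, rfl⟩
    refine ⟨fun i => c (e i), ?_, ?_, ?_⟩
    · rw [mulVec_submatrix_eq_zero_iff]
      have : (fun i => c (e i)) ∘ e.symm = c := by funext j; simp
      rwa [this]
    · rw [mem_span_submatrix_iff]
      have : (fun i => c (e i)) ∘ e.symm = c := by funext j; simp
      rwa [this]
    · rw [hWt_comp_equiv e c]

lemma distCSS_submatrix {q q' m1 m2 m1' m2' : Type*} [Fintype q] [Fintype q']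
    (HX : Matrix m1 q F) (HZ : Matrix m2 q F) (eX : m1' ≃ m1) (eZ : m2' ≃ m2) (e : q' ≃ q) :
    distCSS (HX.submatrix eX e) (HZ.submatrix eZ e) = distCSS HX HZ := by
  rw [distCSS_eq, distCSS_eq, distSet_submatrix, distSet_submatrix]

variable {q m1 m2 n α : Type*} [Fintype n] [Fintype α] [DecidableEq α] [Fintype m1] [Fintype m2]

lemma distSet_blockDiagonal_subset [Nonempty α] (A0 : Matrix m1 n F) (B0 : Matrix m2 n F) :
    distSet A0 B0 ⊆
      distSet (blockDiagonal fun _ : α => A0) (blockDiagonal fun _ : α => B0) := by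
  rintro w ⟨c, hc0, hcspan, rfl⟩
  set k0 : α := Classical.arbitrary α
  refine ⟨embMap F k0 c, ?_, ?_, (hWt_embMap k0 c).symm⟩
  · funext ⟨i, k⟩
    rw [blockDiagonal_mulVec_apply]
    by_cases h : k = k0
    · have heq : sliceMap F k (embMap F k0 c) = c := by funext j; simp [h]
      rw [heq]
      exact congrFun hc0 i
    · have : sliceMap F k (embMap F k0 c) = 0 := by funext j; simp [h]
      rw [this, Matrix.mulVec_zero]
      rfl
  · intro hmem
    apply hcspan
    have := (mem_span_blockDiagonal (fun _ : α => B0) (embMap F k0 c)).1 hmem k0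
    have heq : sliceMap F k0 (embMap F k0 c) = c := by funext j; simp
    rwa [heq] at this

lemma distSet_blockDiagonal_ge [Nonempty α] (A0 : Matrix m1 n F) (B0 : Matrix m2 n F)
    (w : ℕ) (hw : w ∈ distSet (blockDiagonal fun _ : α => A0) (blockDiagonal fun _ : α => B0)) :
    ∃ w' ∈ distSet A0 B0, w' ≤ w := by
  obtain ⟨C, hC0, hCspan, rfl⟩ := hw
  have : ∃ k, sliceMap F k C ∉ Submodule.span F (Set.range fun i => B0 i) := by
    by_contra hall
    push_neg at hall
    exact hCspan ((mem_span_blockDiagonal (fun _ : α => B0) C).2 hall)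
  obtain ⟨k, hk⟩ := this
  refine ⟨hWt (sliceMap F k C), ⟨sliceMap F k C, ?_, hk, rfl⟩, hWt_sliceMap_le k C⟩
  funext i
  have := congrFun hC0 (i, k)
  rw [blockDiagonal_mulVec_apply] at this
  exact this

lemma sInf_eq_of_subset_of_ge {S0 S : Set ℕ} (h1 : S0 ⊆ S)
    (h2 : ∀ w ∈ S, ∃ w' ∈ S0, w' ≤ w) : sInf S = sInf S0 := by
  rcases S.eq_empty_or_nonempty with h | h
  · have h0 : S0 = ∅ := Set.eq_empty_of_subset_empty (h ▸ h1)
    rw [h, h0]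
  · obtain ⟨w', hw'0, hle⟩ := h2 _ (Nat.sInf_mem h)
    apply le_antisymm
    · exact Nat.sInf_le (h1 (Nat.sInf_mem ⟨w', hw'0⟩))
    · exact le_trans (Nat.sInf_le hw'0) hle

lemma distCSS_blockDiagonal [Nonempty α] (HX0 : Matrix m1 n F) (HZ0 : Matrix m2 n F) :
    distCSS (blockDiagonal fun _ : α => HX0) (blockDiagonal fun _ : α => HZ0) =
      distCSS HX0 HZ0 := by
  rw [distCSS_eq, distCSS_eq]
  apply sInf_eq_of_subset_of_ge
  · exact Set.union_subset_union (distSet_blockDiagonal_subset HX0 HZ0)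
      (distSet_blockDiagonal_subset HZ0 HX0)
  · rintro w (hw | hw)
    · obtain ⟨w', hw', hle⟩ := distSet_blockDiagonal_ge HX0 HZ0 w hw
      exact ⟨w', Or.inl hw', hle⟩
    · obtain ⟨w', hw', hle⟩ := distSet_blockDiagonal_ge HZ0 HX0 w hw
      exact ⟨w', Or.inr hw', hle⟩

end dist

lemma rank_submatrix_equiv {F : Type*} [Field F] {m m' n n' : Type*} [Fintype n] [Fintype n']
    (A : Matrix m n F) (e1 : m' ≃ m) (e2 : n' ≃ n) :
    (A.submatrix e1 e2).rank = A.rank := by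
  rw [Matrix.rank, Matrix.rank, Matrix.mulVecLin_submatrix, LinearMap.range_comp,
    LinearMap.range_comp,
    show LinearMap.funLeft F F ⇑e2.symm = ↑(LinearEquiv.funCongrLeft F F e2.symm) from rfl,
    LinearEquiv.range, Submodule.map_top,
    show LinearMap.funLeft F F ⇑e1 = ↑(LinearEquiv.funCongrLeft F F e1) from rfl,
    LinearEquiv.finrank_map_eq]

/-- Commensurate GB codes -/
theorem stmt_16 (F : Type*) [Field F] [Fintype F] (ℓ0 Δ ℓ : ℕ) [NeZero ℓ0] [NeZero ℓ]
    (hΔ : 1 < Δ) (hℓ : ℓ = ℓ0 * Δ) (a0 b0 : Polynomial F)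
    (ha0 : a0.natDegree < ℓ0) (hb0 : b0.natDegree < ℓ0) (a b : Polynomial F)
    (ha : a = a0.comp (X ^ Δ)) (hb : b = b0.comp (X ^ Δ)) :
    gbDim F ℓ a b = Δ * gbDim F ℓ0 a0 b0 ∧ gbDist F ℓ a b = gbDist F ℓ0 a0 b0 := by
  subst hℓ ha hb
  haveI : NeZero Δ := ⟨by omega⟩
  haveI : Nonempty (Fin Δ) := ⟨⟨0, by omega⟩⟩
  have hX := GBHX_submatrix F ℓ0 Δ a0 b0
  have hZ := GBHZ_submatrix F ℓ0 Δ a0 b0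
  constructor
  · -- dimension
    have hrX : (GBHX F (ℓ0 * Δ) (a0.comp (X ^ Δ)) (b0.comp (X ^ Δ))).rank =
        Δ * (GBHX F ℓ0 a0 b0).rank := by
      rw [← rank_submatrix_equiv _ finProdFinEquiv (colEquiv ℓ0 Δ), hX, rank_blockDiagonal]
      simp [Finset.sum_const, Finset.card_univ, mul_comm]
    have hrZ : (GBHZ F (ℓ0 * Δ) (a0.comp (X ^ Δ)) (b0.comp (X ^ Δ))).rank =
        Δ * (GBHZ F ℓ0 a0 b0).rank := by
      rw [← rank_submatrix_equiv _ finProdFinEquiv (colEquiv ℓ0 Δ), hZ, rank_blockDiagonal]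
      simp [Finset.sum_const, Finset.card_univ, mul_comm]
    unfold gbDim
    rw [hrX, hrZ]
    set rX := (GBHX F ℓ0 a0 b0).rank with hrXdef
    set rZ := (GBHZ F ℓ0 a0 b0).rank with hrZdef
    have h1 : rX ≤ ℓ0 := by
      have := Matrix.rank_le_card_height (GBHX F ℓ0 a0 b0)
      simpa using this
    have h2 : rZ ≤ ℓ0 := by
      have := Matrix.rank_le_card_height (GBHZ F ℓ0 a0 b0)
      simpa using this
    obtain ⟨u, hu⟩ : ∃ u, 2 * ℓ0 = u + rX + rZ := ⟨2 * ℓ0 - rX - rZ, by omega⟩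
    have hgoal : 2 * ℓ0 - rX - rZ = u := by omega
    rw [hgoal]
    have key : 2 * (ℓ0 * Δ) = Δ * u + Δ * rX + Δ * rZ := by
      have : 2 * (ℓ0 * Δ) = (2 * ℓ0) * Δ := by ring
      rw [this, hu]; ring
    omega
  · -- distance
    unfold gbDist
    rw [← distCSS_submatrix (GBHX F (ℓ0 * Δ) (a0.comp (X ^ Δ)) (b0.comp (X ^ Δ)))
      (GBHZ F (ℓ0 * Δ) (a0.comp (X ^ Δ)) (b0.comp (X ^ Δ)))
      finProdFinEquiv finProdFinEquiv (colEquiv ℓ0 Δ), hX, hZ]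
    exact distCSS_blockDiagonal _ _
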